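/- A topological group containing an f_1*-productive sequence has cardinality at least the continuum 𝔠. -/

import Mathlib

open Filter Topology

def partProd {G : Type*} [Monoid G] (b : ℕ → G) (n : ℕ) : G :=
  ((List.range n).map b).prod

/-- A faithfully indexed sequence `a` is `f_1*`-productive if for every strictly increasing
`μ : ℕ → ℕ` the partial products `a (μ 0) * ⋯ * a (μ k)` converge as `k → ∞`. -/
def F1StarProductive {G : Type*} [Group G] [TopologicalSpace G] (a : ℕ → G) : Prop :=
  Function.Injective a ∧
    ∀ μ : ℕ → ℕ, StrictMono μ →
      ∃ x : G, Tendsto (fun k => partProd (fun i => a (μ i)) (k + 1)) atTop (𝓝 x)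

theorem partProd_succ {G : Type*} [Monoid G] (b : ℕ → G) (n : ℕ) :
    partProd b (n + 1) = partProd b n * b n := by
  simp [partProd, List.range_succ]

theorem partProd_add {G : Type*} [Monoid G] (b : ℕ → G) (m n : ℕ) :
    partProd b (m + n) = partProd b m * partProd (fun i => b (m + i)) n := by
  induction n with
  | zero => simp [partProd]
  | succ n ih => rw [← Nat.add_assoc, partProd_succ, ih, partProd_succ, mul_assoc]

theorem partProd_congr {G : Type*} [Monoid G] {b c : ℕ → G} (n : ℕ)
    (h : ∀ i < n, b i = c i) : partProd b n = partProd c n := by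
  unfold partProd
  congr 1
  exact List.map_congr_left fun i hi => h i (List.mem_range.mp hi)

section Uniform

variable {G : Type*} [Group G] [TopologicalSpace G] [IsTopologicalGroup G] [T2Space G]

theorem uniform_small (a : ℕ → G) (ha : F1StarProductive a) {U : Set G} (hU : U ∈ 𝓝 (1 : G)) :
    ∃ N : ℕ, ∀ μ : ℕ → ℕ, StrictMono μ → N ≤ μ 0 → ∀ x : G,
      Tendsto (fun k => partProd (fun i => a (μ i)) (k + 1)) atTop (𝓝 x) → x ∈ U := by
  by_contra hcon
  push_neg at hcon
  obtain ⟨C, hC, hCcl, hCU⟩ := exists_mem_nhds_isClosed_subset hU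
  have main : ∀ N : ℕ, ∃ μ : ℕ → ℕ, StrictMono μ ∧ N ≤ μ 0 ∧
      ∃ k : ℕ, partProd (fun i => a (μ i)) (k + 1) ∉ C := by
    intro N
    obtain ⟨μ, hμ, hμ0, x, hx, hxU⟩ := hcon N
    refine ⟨μ, hμ, hμ0, ?_⟩
    have hxC : x ∈ Cᶜ := fun h => hxU (hCU h)
    have := hx.eventually (hCcl.isOpen_compl.mem_nhds hxC)
    exact this.exists
  choose F hFmono hF0 K hK using main
  -- block start bound and block index boundaries
  obtain ⟨B, hB⟩ : ∃ B : ℕ → ℕ, ∀ j, B (j + 1) = F (B j) (K (B j)) + 1 :=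
    ⟨fun j => Nat.rec 0 (fun j bj => F bj (K bj) + 1) j, fun _ => rfl⟩
  obtain ⟨s, hs0, hssucc⟩ : ∃ s : ℕ → ℕ, s 0 = 0 ∧ ∀ j, s (j + 1) = s j + (K (B j) + 1) :=
    ⟨fun j => Nat.rec 0 (fun j sj => sj + (K (B j) + 1)) j, rfl, fun _ => rfl⟩
  have hsmono : StrictMono s := strictMono_nat_of_lt_succ fun j => by
    rw [hssucc]; omega
  have hsge : ∀ j, j ≤ s j := by
    intro j
    induction j with
    | zero => simp [hs0]
    | succ j ih => rw [hssucc]; omega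
  -- block index of position m
  let J : ℕ → ℕ := fun m => Nat.findGreatest (fun j => s j ≤ m) m
  have hJ1 : ∀ m, s (J m) ≤ m := fun m =>
    Nat.findGreatest_spec (P := fun j => s j ≤ m) (Nat.zero_le m) (by simpa [hs0] using Nat.zero_le m)
  have hJ2 : ∀ m, m < s (J m + 1) := by
    intro m
    by_contra h
    push_neg at h
    have h1 : J m + 1 ≤ m := le_trans (hsge _) h
    have h2 := Nat.le_findGreatest (P := fun j => s j ≤ m) h1 h
    simp only [J] at h2
    omega
  have hJeq : ∀ j m, s j ≤ m → m < s (j + 1) → J m = j := by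
    intro j m h1 h2
    have hle : j ≤ J m := Nat.le_findGreatest (P := fun j => s j ≤ m) (le_trans (hsge j) h1) h1
    have hlt : J m < j + 1 := by
      by_contra h
      push_neg at h
      have h3 := hsmono.monotone h
      have h4 := hJ1 m
      omega
    omega
  obtain ⟨μ, hμdef⟩ : ∃ μ : ℕ → ℕ, ∀ m, μ m = F (B (J m)) (m - s (J m)) :=
    ⟨fun m => F (B (J m)) (m - s (J m)), fun _ => rfl⟩
  have hμval : ∀ j i, i ≤ K (B j) → μ (s j + i) = F (B j) i := by
    intro j i hi
    have hJ : J (s j + i) = j := hJeq j _ (Nat.le_add_right _ _) (by rw [hssucc]; omega)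
    rw [hμdef, hJ, Nat.add_sub_cancel_left]
  have hμmono : StrictMono μ := by
    apply strictMono_nat_of_lt_succ
    intro m
    obtain ⟨j, hj1, hj2⟩ : ∃ j, s j ≤ m ∧ m < s (j + 1) := ⟨J m, hJ1 m, hJ2 m⟩
    rw [hssucc] at hj2
    obtain ⟨i, hi_le, rfl⟩ : ∃ i, i ≤ K (B j) ∧ m = s j + i := ⟨m - s j, by omega, by omega⟩
    rcases lt_or_eq_of_le hi_le with hlt | heq
    · have e1 : s j + i + 1 = s j + (i + 1) := by omega
      rw [hμval j i hi_le, e1, hμval j (i + 1) hlt]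
      exact hFmono _ (Nat.lt_succ_self _)
    · have e1 : s j + i + 1 = s (j + 1) + 0 := by rw [hssucc]; omega
      rw [hμval j i hi_le, e1, hμval (j + 1) 0 (Nat.zero_le _), heq]
      have h5 := hF0 (B (j + 1))
      have h6 := hB j
      omega
  obtain ⟨x, hx⟩ := ha.2 μ hμmono
  have hP : Tendsto (fun m => partProd (fun i => a (μ i)) m) atTop (𝓝 x) :=
    (tendsto_add_atTop_iff_nat 1).mp hx
  have hs_top : Tendsto s atTop atTop := hsmono.tendsto_atTop
  have hPs : Tendsto (fun j => partProd (fun i => a (μ i)) (s j)) atTop (𝓝 x) :=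
    hP.comp hs_top
  have hPs1 : Tendsto (fun j => partProd (fun i => a (μ i)) (s (j + 1))) atTop (𝓝 x) :=
    hP.comp (hs_top.comp (tendsto_add_atTop_nat 1))
  have hQ : Tendsto (fun j => (partProd (fun i => a (μ i)) (s j))⁻¹ *
      partProd (fun i => a (μ i)) (s (j + 1))) atTop (𝓝 1) := by
    have h6 := hPs.inv.mul hPs1
    simpa using h6
  have hQeq : ∀ j, (partProd (fun i => a (μ i)) (s j))⁻¹ * partProd (fun i => a (μ i)) (s (j + 1))
      = partProd (fun i => a (F (B j) i)) (K (B j) + 1) := by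
    intro j
    rw [hssucc, partProd_add, inv_mul_cancel_left]
    exact partProd_congr _ fun i hi => by rw [hμval j i (Nat.lt_succ_iff.mp hi)]
  obtain ⟨j, hj⟩ := (hQ.eventually_mem hC).exists
  rw [hQeq j] at hj
  exact hK (B j) hj

theorem tendsto_partProd_split (a : ℕ → G) (ha : F1StarProductive a) (μ : ℕ → ℕ)
    (hμ : StrictMono μ) (c : ℕ) (x : G)
    (hx : Tendsto (fun k => partProd (fun i => a (μ i)) (k + 1)) atTop (𝓝 x)) :
    ∃ t : G, Tendsto (fun k => partProd (fun i => a (μ (c + i))) (k + 1)) atTop (𝓝 t) ∧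
      x = partProd (fun i => a (μ i)) c * t := by
  have hμ' : StrictMono fun i => μ (c + i) := hμ.comp fun i j hij => by omega
  obtain ⟨t, ht⟩ := ha.2 _ hμ'
  refine ⟨t, ht, ?_⟩
  have h1 : Tendsto (fun k => partProd (fun i => a (μ i)) (c + (k + 1))) atTop (𝓝 x) := by
    have h0 := hx.comp (tendsto_add_atTop_nat c)
    have he : (fun k => partProd (fun i => a (μ i)) (c + (k + 1)))
        = fun k => partProd (fun i => a (μ i)) (k + c + 1) := by
      funext k; congr 1; omega
    rw [he]
    exact h0
  have h2 : Tendsto (fun k => partProd (fun i => a (μ i)) (c + (k + 1))) atTop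
      (𝓝 (partProd (fun i => a (μ i)) c * t)) := by
    have he : (fun k => partProd (fun i => a (μ i)) (c + (k + 1)))
        = fun k => partProd (fun i => a (μ i)) c * partProd (fun i => a (μ (c + i))) (k + 1) :=
      funext fun k => partProd_add _ c (k + 1)
    rw [he]
    exact ht.const_mul _
  exact tendsto_nhds_unique h1 h2

theorem exists_fastSeq (a : ℕ → G) (ha : F1StarProductive a) :
    ∃ n : ℕ → ℕ, StrictMono n ∧ ∀ k : ℕ, ∃ U : Set G,
      (∀ u ∈ U, ∀ u' ∈ U, a (n (2 * k + 1)) * u ≠ u') ∧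
      ∀ μ : ℕ → ℕ, StrictMono μ → n (2 * k + 2) ≤ μ 0 → ∀ x : G,
        Tendsto (fun j => partProd (fun i => a (μ i)) (j + 1)) atTop (𝓝 x) → x ∈ U := by
  have hne : ∀ m : ℕ, ∃ v, m < v ∧ a v ≠ 1 := by
    intro m
    by_contra h
    push_neg at h
    have h1 := h (m + 1) (by omega)
    have h2 := h (m + 2) (by omega)
    have := ha.1 (h1.trans h2.symm)
    omega
  have hsep : ∀ v : ℕ, a v ≠ 1 → ∃ U ∈ 𝓝 (1 : G), ∀ u ∈ U, ∀ u' ∈ U, a v * u ≠ u' := by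
    intro v hv
    have hW : ({a v}ᶜ : Set G) ∈ 𝓝 (1 : G) := by
      refine IsOpen.mem_nhds isOpen_compl_singleton ?_
      simpa using Ne.symm hv
    obtain ⟨V, hV, hVp⟩ := exists_nhds_split_inv hW
    refine ⟨V, hV, ?_⟩
    intro u hu u' hu' heq
    have hmem := hVp u' hu' u hu
    apply hmem
    simp only [Set.mem_singleton_iff, div_eq_mul_inv, ← heq]
    group
  have step : ∀ m : ℕ, ∃ v N : ℕ, ∃ U : Set G, m < v ∧ v < N ∧
      (∀ u ∈ U, ∀ u' ∈ U, a v * u ≠ u') ∧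
      ∀ μ : ℕ → ℕ, StrictMono μ → N ≤ μ 0 → ∀ x : G,
        Tendsto (fun j => partProd (fun i => a (μ i)) (j + 1)) atTop (𝓝 x) → x ∈ U := by
    intro m
    obtain ⟨v, hmv, hv⟩ := hne m
    obtain ⟨U, hU, hUsep⟩ := hsep v hv
    obtain ⟨N₀, hN₀⟩ := uniform_small a ha hU
    refine ⟨v, max N₀ (v + 1), U, hmv, by omega, hUsep, ?_⟩
    intro μ hμ hμ0 x hx
    exact hN₀ μ hμ (le_trans (le_max_left _ _) hμ0) x hx
  choose v N U hv hvN hUsep hUuni using step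
  obtain ⟨E, hE0, hEs⟩ : ∃ E : ℕ → ℕ, E 0 = 0 ∧ ∀ k, E (k + 1) = N (E k) :=
    ⟨fun k => Nat.rec 0 (fun _ Ek => N Ek) k, rfl, fun _ => rfl⟩
  obtain ⟨n, hn⟩ : ∃ n : ℕ → ℕ, ∀ m,
      n m = if m % 2 = 0 then E (m / 2) else v (E (m / 2)) :=
    ⟨_, fun _ => rfl⟩
  have hneven : ∀ k, n (2 * k) = E k := by
    intro k
    rw [hn, if_pos (by omega), show 2 * k / 2 = k by omega]
  have hnodd : ∀ k, n (2 * k + 1) = v (E k) := by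
    intro k
    rw [hn, if_neg (by omega), show (2 * k + 1) / 2 = k by omega]
  have hmono : StrictMono n := by
    apply strictMono_nat_of_lt_succ
    intro m
    rcases Nat.even_or_odd m with ⟨k, hk⟩ | ⟨k, hk⟩
    · have e1 : m = 2 * k := by omega
      have e2 : m + 1 = 2 * k + 1 := by omega
      rw [e2, e1, hneven, hnodd]
      exact hv (E k)
    · have e1 : m = 2 * k + 1 := by omega
      have e2 : m + 1 = 2 * (k + 1) := by omega
      rw [e2, e1, hnodd, hneven, hEs]
      exact hvN (E k)
  refine ⟨n, hmono, fun k => ⟨U (E k), ?_, ?_⟩⟩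
  · rw [hnodd]
    exact hUsep (E k)
  · rw [show 2 * k + 2 = 2 * (k + 1) by omega, hneven, hEs]
    exact hUuni (E k)

end Uniform

def codeSet (z : ℕ → Bool) : ℕ → Prop := fun m => m % 2 = 0 ∨ z (m / 2) = true

instance codeSet.instDecPred (z : ℕ → Bool) : DecidablePred (codeSet z) := fun m =>
  show Decidable (m % 2 = 0 ∨ z (m / 2) = true) from inferInstance

theorem codeSet_infinite (z : ℕ → Bool) : (setOf (codeSet z)).Infinite :=
  Set.infinite_of_injective_forall_mem (f := fun k : ℕ => 2 * k)
    (fun a b h => Nat.eq_of_mul_eq_mul_left (by norm_num) h)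
    (fun k => Or.inl (Nat.mul_mod_right 2 k))

theorem count_congr' {p q : ℕ → Prop} [DecidablePred p] [DecidablePred q] (n : ℕ)
    (h : ∀ m < n, (p m ↔ q m)) : Nat.count p n = Nat.count q n := by
  rw [Nat.count_eq_card_filter_range, Nat.count_eq_card_filter_range]
  congr 1
  apply Finset.filter_congr
  intro m hm
  simpa using h m (Finset.mem_range.mp hm)


/-- A topological group containing an `f_1*`-productive sequence has cardinality at least
the continuum. -/
theorem stmt_13 {G : Type*} [Group G] [TopologicalSpace G] [IsTopologicalGroup G] [T2Space G]
    (a : ℕ → G) (ha : F1StarProductive a) :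
    Cardinal.continuum ≤ Cardinal.mk G := by
  obtain ⟨n, hnmono, hfast⟩ := exists_fastSeq a ha
  choose U hUsep hUuni using hfast
  have hμz : ∀ z : ℕ → Bool, StrictMono fun i => n (Nat.nth (codeSet z) i) :=
    fun z => hnmono.comp (Nat.nth_strictMono (codeSet_infinite z))
  have hex : ∀ z : ℕ → Bool, ∃ x : G,
      Tendsto (fun k => partProd (fun i => a (n (Nat.nth (codeSet z) i))) (k + 1)) atTop (𝓝 x) :=
    fun z => ha.2 _ (hμz z)
  choose f hf using hex
  have key : ∀ z w : ℕ → Bool, ∀ k : ℕ, (∀ j < k, z j = w j) → z k = true → w k = false →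
      f z ≠ f w := by
    intro z w k hagree hzk hwk hfzw
    have hinfz := codeSet_infinite z
    have hinfw := codeSet_infinite w
    set c := Nat.count (codeSet z) (2 * k + 1) with hc
    have hagree' : ∀ m < 2 * k + 1, (codeSet z m ↔ codeSet w m) := by
      intro m hm
      unfold codeSet
      by_cases h : m % 2 = 0
      · simp [h]
      · have hmk : m / 2 < k := by omega
        rw [hagree _ hmk]
    have hcw : Nat.count (codeSet w) (2 * k + 1) = c := by
      rw [hc]
      exact count_congr' _ fun m hm => (hagree' m hm).symm
    have hzmem : codeSet z (2 * k + 1) :=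
      Or.inr (by rw [show (2 * k + 1) / 2 = k by omega]; exact hzk)
    have hnthzc : Nat.nth (codeSet z) c = 2 * k + 1 := by
      rw [hc]; exact Nat.nth_count hzmem
    have hwnot : ¬ codeSet w (2 * k + 1) := by
      unfold codeSet
      push_neg
      refine ⟨by omega, ?_⟩
      rw [show (2 * k + 1) / 2 = k by omega, hwk]
      simp
    have hwmem : codeSet w (2 * k + 2) := Or.inl (by omega)
    have hcount2 : Nat.count (codeSet w) (2 * k + 2) = c := by
      rw [show 2 * k + 2 = (2 * k + 1) + 1 by omega, Nat.count_succ, if_neg hwnot, hcw]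
      rfl
    have hnthwc : Nat.nth (codeSet w) c = 2 * k + 2 := by
      rw [← hcount2]; exact Nat.nth_count hwmem
    have hpre : ∀ i < c, Nat.nth (codeSet z) i = Nat.nth (codeSet w) i := by
      intro i hi
      have hxlt : Nat.nth (codeSet z) i < 2 * k + 1 := by
        rw [← hnthzc]; exact (Nat.nth_lt_nth hinfz).mpr hi
      have hpx : codeSet z (Nat.nth (codeSet z) i) := Nat.nth_mem_of_infinite hinfz i
      have hcx : Nat.count (codeSet z) (Nat.nth (codeSet z) i) = i :=
        Nat.count_nth fun hfin => absurd hfin hinfz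
      have hpwx : codeSet w (Nat.nth (codeSet z) i) := (hagree' _ hxlt).mp hpx
      have hcwx : Nat.count (codeSet w) (Nat.nth (codeSet z) i) = i :=
        (count_congr' (Nat.nth (codeSet z) i) fun m hm => (hagree' m (by omega)).symm).trans hcx
      have h1 := Nat.nth_count hpwx
      rw [hcwx] at h1
      exact h1.symm
    obtain ⟨tz, htz, hxz⟩ := tendsto_partProd_split a ha _ (hμz z) (c + 1) (f z) (hf z)
    obtain ⟨tw, htw, hxw⟩ := tendsto_partProd_split a ha _ (hμz w) c (f w) (hf w)
    have htzU : tz ∈ U k := by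
      refine hUuni k (fun i => n (Nat.nth (codeSet z) (c + 1 + i)))
        ((hμz z).comp fun i j h => by omega) ?_ tz htz
      have h1 : 2 * k + 2 ≤ Nat.nth (codeSet z) (c + 1) := by
        have h2 := (Nat.nth_lt_nth hinfz).mpr (lt_add_one c)
        rw [hnthzc] at h2
        omega
      simpa using hnmono.monotone h1
    have htwU : tw ∈ U k := by
      refine hUuni k (fun i => n (Nat.nth (codeSet w) (c + i)))
        ((hμz w).comp fun i j h => by omega) ?_ tw htw
      have h1 : 2 * k + 2 ≤ Nat.nth (codeSet w) c := le_of_eq hnthwc.symm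
      simpa using hnmono.monotone h1
    have hprefix : partProd (fun i => a (n (Nat.nth (codeSet z) i))) c
        = partProd (fun i => a (n (Nat.nth (codeSet w) i))) c :=
      partProd_congr _ fun i hi => by rw [hpre i hi]
    simp only [partProd_succ] at hxz
    rw [hnthzc, hprefix] at hxz
    have hcomb : partProd (fun i => a (n (Nat.nth (codeSet w) i))) c * (a (n (2 * k + 1)) * tz)
        = partProd (fun i => a (n (Nat.nth (codeSet w) i))) c * tw := by
      rw [← mul_assoc, ← hxz, ← hxw, hfzw]
    have h2 : a (n (2 * k + 1)) * tz = tw := mul_left_cancel hcomb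
    exact hUsep k tz htzU tw htwU h2
  have hinj : Function.Injective f := by
    intro z w hzw
    by_contra hne
    have hexk : ∃ k, z k ≠ w k := Function.ne_iff.mp hne
    have hk : z (Nat.find hexk) ≠ w (Nat.find hexk) := Nat.find_spec hexk
    have hagree : ∀ j < Nat.find hexk, z j = w j := fun j hj => by
      have := Nat.find_min hexk hj
      simpa using this
    cases hzv : z (Nat.find hexk) with
    | true =>
      have hwv : w (Nat.find hexk) = false := by
        cases hwv : w (Nat.find hexk)
        · rfl
        · rw [hzv, hwv] at hk; exact absurd rfl hk
      exact key z w (Nat.find hexk) hagree hzv hwv hzw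
    | false =>
      have hwv : w (Nat.find hexk) = true := by
        cases hwv : w (Nat.find hexk)
        · rw [hzv, hwv] at hk; exact absurd rfl hk
        · rfl
      exact key w z (Nat.find hexk) (fun j hj => (hagree j hj).symm) hwv hzv hzw.symm
  have hle := Cardinal.lift_mk_le_lift_mk_of_injective hinj
  simp only [Cardinal.mk_arrow, Cardinal.mk_bool, Cardinal.mk_nat, Cardinal.lift_two,
    Cardinal.lift_aleph0, Cardinal.two_power_aleph0, Cardinal.lift_continuum,
    Cardinal.lift_id, Cardinal.lift_uzero] at hle
  exact hle
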